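/- (Fixed point iff stationary point) Let C be a box, H̃ = V T Vᵀ + c U Uᵀ symmetric positive definite with V having orthonormal columns whose first column is ∇f(x*)/‖∇f(x*)‖₂ (if ∇f(x*) ≠ 0), and μ* > 0. Then x* ∈ C satisfies x* = Π_{H̃}(x* − μ* V T⁻¹ Vᵀ ∇f(x*)) if and only if ∇f(x*)ᵀ(z − x*) ≥ 0 for all z ∈ C, i.e., x* is a stationary point of the bound-constrained problem min_{x∈C} f(x). (If ∇f(x*) = 0 both conditions hold trivially.) -/

import Mathlib

open Matrix

/-- Fixed point iff stationary point: `x* ∈ C` is a fixed point of the PNKH-B map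
`x ↦ Π_{H̃}(x - μ V T⁻¹ Vᵀ ∇f(x))` (projection in the `H̃`-metric onto the box `C`)
if and only if `∇f(x*)ᵀ (z - x*) ≥ 0` for all `z ∈ C`, i.e. `x*` is a stationary
point of the bound-constrained problem. -/
theorem stmt6 {n l : ℕ} (hl : 0 < l)
    (V : Matrix (Fin n) (Fin l) ℝ) (hV : Vᵀ * V = 1)
    (T : Matrix (Fin l) (Fin l) ℝ) (hT : T.PosDef)
    (U : Matrix (Fin n) (Fin (n - l)) ℝ) (hU : U * Uᵀ = 1 - V * Vᵀ)
    (c : ℝ) (hc : 0 < c)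
    (Ht : Matrix (Fin n) (Fin n) ℝ) (hHt : Ht = V * T * Vᵀ + c • (U * Uᵀ))
    (hHtpd : Ht.PosDef)
    (lo hi : Fin n → ℝ) (C : Set (Fin n → ℝ))
    (hC : C = {v : Fin n → ℝ | ∀ i, lo i ≤ v i ∧ v i ≤ hi i})
    (f : (Fin n → ℝ) → ℝ) (xs : Fin n → ℝ) (hxs : xs ∈ C)
    (g : Fin n → ℝ) (hg : HasGradientAt (fun v : EuclideanSpace ℝ (Fin n) => f v) (WithLp.toLp 2 g) (WithLp.toLp 2 xs))
    (hcol : g ≠ 0 → ∀ i, V i ⟨0, hl⟩ = g i / Real.sqrt (g ⬝ᵥ g))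
    (μ : ℝ) (hμ : 0 < μ)
    (y : Fin n → ℝ) (hy : y = xs - μ • ((V * T⁻¹ * Vᵀ) *ᵥ g)) :
    (∀ z ∈ C, (xs - y) ⬝ᵥ Ht *ᵥ (xs - y) ≤ (z - y) ⬝ᵥ Ht *ᵥ (z - y)) ↔
      (∀ z ∈ C, 0 ≤ g ⬝ᵥ (z - xs)) := by
  have hTi : T * T⁻¹ = 1 := T.mul_nonsing_inv (isUnit_iff_ne_zero.mpr hT.det_pos.ne')
  -- `Ht * (V * T⁻¹ * Vᵀ) = V * Vᵀ`
  have hmain : Ht * (V * T⁻¹ * Vᵀ) = V * Vᵀ := by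
    have h1 : V * T * Vᵀ * (V * T⁻¹ * Vᵀ) = V * Vᵀ := by
      calc V * T * Vᵀ * (V * T⁻¹ * Vᵀ)
          = V * (T * ((Vᵀ * V) * (T⁻¹ * Vᵀ))) := by simp only [Matrix.mul_assoc]
        _ = V * (T * T⁻¹) * Vᵀ := by rw [hV, Matrix.one_mul]; simp only [Matrix.mul_assoc]
        _ = V * Vᵀ := by rw [hTi, Matrix.mul_one]
    have h2 : (U * Uᵀ) * (V * T⁻¹ * Vᵀ) = 0 := by
      rw [hU, Matrix.sub_mul, Matrix.one_mul]
      have h3 : V * Vᵀ * (V * T⁻¹ * Vᵀ) = V * T⁻¹ * Vᵀ := by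
        calc V * Vᵀ * (V * T⁻¹ * Vᵀ) = V * ((Vᵀ * V) * (T⁻¹ * Vᵀ)) := by
              simp only [Matrix.mul_assoc]
          _ = V * T⁻¹ * Vᵀ := by rw [hV, Matrix.one_mul]; simp only [Matrix.mul_assoc]
      rw [h3, sub_self]
    rw [hHt, Matrix.add_mul, h1, Matrix.smul_mul, h2, smul_zero, add_zero]
  -- `(V * Vᵀ) *ᵥ g = g`
  have hVVg : (V * Vᵀ) *ᵥ g = g := by
    by_cases hg0 : g = 0
    · simp [hg0]
    · set s := Real.sqrt (g ⬝ᵥ g) with hs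
      have hgg : 0 < g ⬝ᵥ g := by
        have h1 : 0 ≤ g ⬝ᵥ g := Finset.sum_nonneg fun i _ => mul_self_nonneg _
        rcases h1.lt_or_eq with h | h
        · exact h
        · exact absurd (dotProduct_self_eq_zero.mp h.symm) hg0
      have hs0 : 0 < s := Real.sqrt_pos.mpr hgg
      have hgw : V *ᵥ Pi.single ⟨0, hl⟩ s = g := by
        funext i
        rw [Matrix.mulVec_single]
        show V i ⟨0, hl⟩ * s = g i
        rw [hcol hg0 i, div_mul_cancel₀ _ hs0.ne']
      have hVVV : V * Vᵀ * V = V := by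
        rw [Matrix.mul_assoc, hV, Matrix.mul_one]
      calc (V * Vᵀ) *ᵥ g = (V * Vᵀ) *ᵥ (V *ᵥ Pi.single ⟨0, hl⟩ s) := by rw [hgw]
        _ = (V * Vᵀ * V) *ᵥ Pi.single ⟨0, hl⟩ s := by rw [Matrix.mulVec_mulVec]
        _ = g := by rw [hVVV, hgw]
  -- the key identity `Ht *ᵥ (xs - y) = μ • g`
  have hxy : xs - y = μ • ((V * T⁻¹ * Vᵀ) *ᵥ g) := by rw [hy, sub_sub_cancel]
  have hHxy : Ht *ᵥ (xs - y) = μ • g := by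
    rw [hxy, Matrix.mulVec_smul, Matrix.mulVec_mulVec, hmain, hVVg]
  have hsym : Htᵀ = Ht := hHtpd.1
  -- expansion of the quadratic form
  have hexp : ∀ w : Fin n → ℝ, ((xs - y) + w) ⬝ᵥ Ht *ᵥ ((xs - y) + w)
      = (xs - y) ⬝ᵥ Ht *ᵥ (xs - y) + 2 * (μ * (g ⬝ᵥ w)) + w ⬝ᵥ Ht *ᵥ w := by
    intro w
    have hvm : (xs - y) ᵥ* Ht = μ • g := by
      rw [← hsym, Matrix.vecMul_transpose, hHxy]
    have hcross : (xs - y) ⬝ᵥ Ht *ᵥ w = μ * (g ⬝ᵥ w) := by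
      rw [Matrix.dotProduct_mulVec, hvm, smul_dotProduct, smul_eq_mul]
    have hcross2 : w ⬝ᵥ Ht *ᵥ (xs - y) = μ * (g ⬝ᵥ w) := by
      rw [hHxy, dotProduct_smul, smul_eq_mul, dotProduct_comm]
    rw [Matrix.mulVec_add, dotProduct_add, add_dotProduct,
      add_dotProduct, hcross, hcross2]
    ring
  constructor
  · -- fixed point → stationary
    intro hmin z hz
    set d : Fin n → ℝ := z - xs with hd
    have hQ : 0 ≤ d ⬝ᵥ Ht *ᵥ d := hHtpd.posSemidef.dotProduct_mulVec_nonneg d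
    set Q : ℝ := d ⬝ᵥ Ht *ᵥ d with hQdef
    have key : ∀ t : ℝ, 0 < t → t ≤ 1 → 0 ≤ 2 * (μ * (g ⬝ᵥ d)) + t * Q := by
      intro t ht0 ht1
      have hzt : xs + t • d ∈ C := by
        rw [hC]
        intro i
        have h1 := (hC ▸ hxs) i
        have h2 := (hC ▸ hz) i
        have hdi : (xs + t • d) i = xs i + t * (z i - xs i) := by
          simp [hd]
        rw [hdi]
        constructor <;> nlinarith [h1.1, h1.2, h2.1, h2.2]
      have hm := hmin (xs + t • d) hzt
      have hrw : xs + t • d - y = (xs - y) + t • d := by abel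
      rw [hrw, hexp (t • d)] at hm
      have hgd : g ⬝ᵥ (t • d) = t * (g ⬝ᵥ d) := by
        rw [dotProduct_smul, smul_eq_mul]
      have hqd : (t • d) ⬝ᵥ Ht *ᵥ (t • d) = t * (t * Q) := by
        rw [smul_dotProduct, Matrix.mulVec_smul, dotProduct_smul,
          smul_eq_mul, smul_eq_mul, hQdef]
      rw [hgd, hqd] at hm
      nlinarith
    by_contra hlt
    push_neg at hlt
    have hgd : g ⬝ᵥ d < 0 := hlt
    have hQ1 : 0 < Q + 1 := by linarith
    set t : ℝ := min 1 (-(μ * (g ⬝ᵥ d)) / (Q + 1)) with ht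
    have ht0 : 0 < t := lt_min one_pos (div_pos (by nlinarith) hQ1)
    have hkey := key t ht0 (min_le_left _ _)
    have htle : t ≤ -(μ * (g ⬝ᵥ d)) / (Q + 1) := min_le_right _ _
    have htQ : t * (Q + 1) ≤ -(μ * (g ⬝ᵥ d)) := by
      rw [← le_div_iff₀ hQ1]; exact htle
    nlinarith
  · -- stationary → fixed point
    intro hstat z hz
    have hrw : z - y = (xs - y) + (z - xs) := by abel
    rw [hrw, hexp (z - xs)]
    have hQ : 0 ≤ (z - xs) ⬝ᵥ Ht *ᵥ (z - xs) := hHtpd.posSemidef.dotProduct_mulVec_nonneg (z - xs)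
    have hgd := hstat z hz
    nlinarith
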